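/- arXiv:1408.5820 — 4 statements merged into one kernel-verified Lean document; each statement's English description precedes it below -/
import Mathlib

section
/- Let M be an m×p matrix with ‖M‖_∞ = max_{i,j}|M_{ij}| ≤ 2L and define T_i = (Y_i − M⁰_{X_i})² − (Y_i − M_{X_i})² for i = 1,…,n. Then Σ_{i=1}^n E[T_i²] ≤ n (8σ² + 2(3L)²)(R(M) − R(M⁰)). -/
open MeasureTheory ProbabilityTheory
open scoped ENNReal BigOperators

noncomputable section

/-- The uniform distribution on the interval `[-a, a]` (Dirac mass at `0` when `a = 0`). -/
def unifIcc (a : ℝ) : Measure ℝ :=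
  if a = 0 then Measure.dirac 0
  else (ENNReal.ofReal (2 * a))⁻¹ • volume.restrict (Set.Icc (-a) a)

/-- Prior on an `m × K` factor matrix: entries of the first `k` columns are i.i.d. uniform on
`[-δ, δ]`, the remaining entries are i.i.d. uniform on `[-κ, κ]`. -/
def factorPrior (m K : ℕ) (δ κ : ℝ) (k : ℕ) : Measure (Fin m → Fin K → ℝ) :=
  Measure.pi fun _ : Fin m => Measure.pi fun ℓ : Fin K =>
    if (ℓ : ℕ) < k then unifIcc δ else unifIcc κ

/-- The matrix product `U Vᵀ`, written entrywise. -/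
def matMul {m p K : ℕ} (U : Fin m → Fin K → ℝ) (V : Fin p → Fin K → ℝ) :
    Fin m → Fin p → ℝ := fun i j => ∑ ℓ, U i ℓ * V j ℓ

/-- The prior `π` on pairs of factors `(U, V)`: the rank parameter `k ∈ {1, …, K}` has
probability `τ^(k-1) (1-τ)/(1-τ^K)` and, given `k`, `U` and `V` are drawn from `factorPrior`
with `δ = √(2L/K)`. -/
def pairPrior (m p K : ℕ) (L τ κ : ℝ) :
    Measure ((Fin m → Fin K → ℝ) × (Fin p → Fin K → ℝ)) :=
  ∑ k ∈ Finset.range K,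
    ENNReal.ofReal (τ ^ k * (1 - τ) / (1 - τ ^ K)) •
      ((factorPrior m K (Real.sqrt (2 * L / K)) κ (k + 1)).prod
        (factorPrior p K (Real.sqrt (2 * L / K)) κ (k + 1)))

/-- The prior `π` on `m × p` matrices: the image of `pairPrior` under `(U, V) ↦ U Vᵀ`. -/
def matPrior (m p K : ℕ) (L τ κ : ℝ) : Measure (Fin m → Fin p → ℝ) :=
  (pairPrior m p K L τ κ).map fun UV => matMul UV.1 UV.2

/-- The Gibbs posterior `ρ̂_λ`, with density `e^{-λ r(M)} / ∫ e^{-λ r} dπ` w.r.t. `π`. -/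
def gibbs {A : Type*} [MeasurableSpace A] (π : Measure A) (lam : ℝ) (r : A → ℝ) :
    Measure A :=
  π.withDensity fun M =>
    ENNReal.ofReal (Real.exp (-lam * r M)) /
      ∫⁻ M', ENNReal.ofReal (Real.exp (-lam * r M')) ∂π

/-- The mean of the Gibbs posterior, i.e. the estimator `M̂_λ = ∫ M ρ̂_λ(dM)` (entrywise). -/
def gibbsMean {m p : ℕ} (π : Measure (Fin m → Fin p → ℝ)) (lam : ℝ)
    (r : (Fin m → Fin p → ℝ) → ℝ) : Fin m → Fin p → ℝ :=
  fun i j => ∫ A, A i j ∂(gibbs π lam r)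

/-- Kullback–Leibler divergence `K(ρ, π) = ∫ log (dρ/dπ) dρ`. -/
def KLdiv {A : Type*} [MeasurableSpace A] (ρ π : Measure A) : ℝ :=
  ∫ x, Real.log ((ρ.rnDeriv π x).toReal) ∂ρ

/-- Empirical risk `r(M) = (1/n) ∑ (Yᵢ - M_{Xᵢ})²`. -/
def empRisk {Ω : Type*} {m p n : ℕ} (X : Fin n → Ω → Fin m × Fin p)
    (Y : Fin n → Ω → ℝ) (ω : Ω) (A : Fin m → Fin p → ℝ) : ℝ :=
  (1 / (n : ℝ)) * ∑ i, (Y i ω - A (X i ω).1 (X i ω).2) ^ 2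

/-- Prediction risk `R(M) = E[(Y - M_X)²]`, computed from the sample indexed by `i₀`
(by the i.i.d. assumption, any index gives the same value). -/
def predRisk {Ω : Type*} [MeasurableSpace Ω] {m p n : ℕ} (P : Measure Ω)
    (X : Fin n → Ω → Fin m × Fin p) (Y : Fin n → Ω → ℝ) (i₀ : Fin n)
    (A : Fin m → Fin p → ℝ) : ℝ :=
  ∫ ω, (Y i₀ ω - A (X i₀ ω).1 (X i₀ ω).2) ^ 2 ∂P

/-- The sampling distribution `Π_{ij} = P(X = (i,j))`. -/
def samplingProb {Ω : Type*} [MeasurableSpace Ω] {m p n : ℕ} (P : Measure Ω)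
    (X : Fin n → Ω → Fin m × Fin p) (i₀ : Fin n) : Fin m → Fin p → ℝ :=
  fun i j => (P {ω | X i₀ ω = (i, j)}).toReal

/-- Generalized square Frobenius norm `‖A‖²_{F,Π} = ∑_{ij} A_{ij}² Π_{ij}`. -/
def genFrobSq {m p : ℕ} (Pi : Fin m → Fin p → ℝ) (A : Fin m → Fin p → ℝ) : ℝ :=
  ∑ i, ∑ j, (A i j) ^ 2 * Pi i j

/-- The set `𝓜(x)` of matrices `M = U Vᵀ` with all factor entries bounded by `√(x/K)`. -/
def lowNormSet (m p K : ℕ) (x : ℝ) : Set (Fin m → Fin p → ℝ) :=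
  {A | ∃ U : Fin m → Fin K → ℝ, ∃ V : Fin p → Fin K → ℝ,
    (∀ i ℓ, |U i ℓ| ≤ Real.sqrt (x / K)) ∧ (∀ j ℓ, |V j ℓ| ≤ Real.sqrt (x / K)) ∧
    A = matMul U V}

/-- The rank of a matrix given as a function. -/
def rk {m p : ℕ} (A : Fin m → Fin p → ℝ) : ℕ := (Matrix.of A).rank

end

/-- Variance bound for `Tᵢ = (Yᵢ - M⁰_{Xᵢ})² - (Yᵢ - M_{Xᵢ})²`:
`∑ E[Tᵢ²] ≤ n (8σ² + 2(3L)²) (R(M) - R(M⁰))`. -/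
theorem second_moment_bound
    (m p n : ℕ) (hm : 0 < m) (hp : 0 < p) (hn : 0 < n)
    (L σ ξ : ℝ) (hL : 0 < L) (hσ : 0 < σ) (hξ : 0 < ξ)
    {Ω : Type*} [MeasurableSpace Ω] (P : Measure Ω) [IsProbabilityMeasure P]
    (X : Fin n → Ω → Fin m × Fin p) (hX : ∀ i, Measurable (X i))
    (E : Fin n → Ω → ℝ) (hE : ∀ i, Measurable (E i))
    (M0 : Fin m → Fin p → ℝ) (hM0 : ∀ i j, |M0 i j| ≤ L)
    (Y : Fin n → Ω → ℝ) (hY : ∀ i ω, Y i ω = M0 (X i ω).1 (X i ω).2 + E i ω)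
    (hident : ∀ i j : Fin n,
      IdentDistrib (fun ω => (X i ω, Y i ω)) (fun ω => (X j ω, Y j ω)) P P)
    (hpairsindep : iIndepFun (fun i ω => (X i ω, Y i ω)) P)
    (hnoisesindep : iIndepFun E P)
    (hnoiseXindep : IndepFun (fun ω => fun i => E i ω) (fun ω => fun i => X i ω) P)
    (hmean : ∀ i, ∫ ω, E i ω ∂P = 0)
    (hmom2 : ∀ i, ∫ ω, (E i ω) ^ 2 ∂P ≤ σ ^ 2)
    (hmomk : ∀ (i : Fin n) (k : ℕ), 3 ≤ k →
      ∫ ω, |E i ω| ^ k ∂P ≤ σ ^ 2 * (Nat.factorial k) * ξ ^ (k - 2))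
    (hmomint : ∀ (i : Fin n) (k : ℕ), Integrable (fun ω => |E i ω| ^ k) P)
    (M : Fin m → Fin p → ℝ) (hM : ∀ i j, |M i j| ≤ 2 * L) :
    ∑ i, ∫ ω, ((Y i ω - M0 (X i ω).1 (X i ω).2) ^ 2
        - (Y i ω - M (X i ω).1 (X i ω).2) ^ 2) ^ 2 ∂P ≤
      (n : ℝ) * (8 * σ ^ 2 + 2 * (3 * L) ^ 2) *
        (predRisk P X Y ⟨0, hn⟩ M - predRisk P X Y ⟨0, hn⟩ M0) := by
  classical
  set i₀ : Fin n := ⟨0, hn⟩ with hi₀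
  set D : Fin m × Fin p → ℝ := fun x => M0 x.1 x.2 - M x.1 x.2 with hDdef
  have hDbound : ∀ x, |D x| ≤ 3 * L := by
    intro x
    have h1 := hM0 x.1 x.2
    have h2 := hM x.1 x.2
    have := abs_sub (M0 x.1 x.2) (M x.1 x.2)
    simp only [hDdef]
    calc |M0 x.1 x.2 - M x.1 x.2| ≤ |M0 x.1 x.2| + |M x.1 x.2| := abs_sub _ _
      _ ≤ 3 * L := by linarith
  have hDmeas : Measurable D := measurable_of_countable D
  have hXDmeas : ∀ i, Measurable (fun ω => D (X i ω)) := fun i => hDmeas.comp (hX i)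
  -- independence of E i and X i
  have hInd : ∀ i, IndepFun (E i) (X i) P := by
    intro i
    have := hnoiseXindep.comp (measurable_pi_apply i) (measurable_pi_apply i)
    exact this
  -- integrability facts
  have hεint : ∀ i, Integrable (E i) P := by
    intro i
    have h := hmomint i 1
    simp only [pow_one] at h
    rw [← integrable_norm_iff ((hE i).aestronglyMeasurable)]
    simpa [Real.norm_eq_abs] using h
  have hε2int : ∀ i, Integrable (fun ω => (E i ω) ^ 2) P := by
    intro i
    have h := hmomint i 2
    simpa [sq_abs] using h
  have hD2int : ∀ i, Integrable (fun ω => (D (X i ω)) ^ 2) P := by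
    intro i
    refine (integrable_const ((3 * L) ^ 2)).mono'
      (((hXDmeas i).pow_const 2).aestronglyMeasurable) ?_
    filter_upwards with ω
    rw [Real.norm_eq_abs, abs_pow]
    have := hDbound (X i ω)
    have h0 : (0:ℝ) ≤ |D (X i ω)| := abs_nonneg _
    nlinarith
  have hεDint : ∀ i, Integrable (fun ω => E i ω * D (X i ω)) P := by
    intro i
    have h := (hεint i).bdd_mul (f := fun ω => D (X i ω)) (c := 3 * L)
      (hXDmeas i).aestronglyMeasurable
      (Filter.Eventually.of_forall fun ω => by simpa [Real.norm_eq_abs] using hDbound (X i ω))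
    exact h.congr (by filter_upwards with ω; ring)
  have hε2D2int : ∀ i, Integrable (fun ω => (E i ω) ^ 2 * (D (X i ω)) ^ 2) P := by
    intro i
    have hb : ∀ ω, ‖(D (X i ω)) ^ 2‖ ≤ (3 * L) ^ 2 := by
      intro ω
      rw [Real.norm_eq_abs, abs_pow]
      have := hDbound (X i ω)
      have h0 : (0:ℝ) ≤ |D (X i ω)| := abs_nonneg _
      nlinarith
    have h := (hε2int i).bdd_mul (f := fun ω => (D (X i ω)) ^ 2)
      ((hXDmeas i).pow_const 2).aestronglyMeasurable (Filter.Eventually.of_forall hb)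
    exact h.congr (by filter_upwards with ω; ring)
  -- E[ε² D²] = E[ε²] E[D²]
  have hprod2 : ∀ i, ∫ ω, (E i ω) ^ 2 * (D (X i ω)) ^ 2 ∂P
      = (∫ ω, (E i ω) ^ 2 ∂P) * ∫ ω, (D (X i ω)) ^ 2 ∂P := by
    intro i
    have hind2 : IndepFun (fun ω => (E i ω) ^ 2) (fun ω => (D (X i ω)) ^ 2) P :=
      (hInd i).comp (measurable_id.pow_const 2)
        (measurable_of_countable (fun x => (D x) ^ 2))
    exact hind2.integral_mul_eq_mul_integral ((hE i).pow_const 2).aestronglyMeasurable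
      ((hXDmeas i).pow_const 2).aestronglyMeasurable
  -- E[ε D] = 0
  have hprod1 : ∀ i, ∫ ω, E i ω * D (X i ω) ∂P = 0 := by
    intro i
    have hind1 : IndepFun (E i) (fun ω => D (X i ω)) P :=
      (hInd i).comp measurable_id hDmeas
    have := hind1.integral_mul_eq_mul_integral (hE i).aestronglyMeasurable
      (hXDmeas i).aestronglyMeasurable
    calc ∫ ω, E i ω * D (X i ω) ∂P = (∫ ω, E i ω ∂P) * ∫ ω, D (X i ω) ∂P := this
      _ = 0 := by rw [hmean i, zero_mul]
  -- ∫ D(X i)² nonneg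
  have hD2nonneg : ∀ i, 0 ≤ ∫ ω, (D (X i ω)) ^ 2 ∂P := by
    intro i
    exact integral_nonneg fun ω => sq_nonneg _
  set c : ℝ := 8 * σ ^ 2 + 2 * (3 * L) ^ 2 with hc
  -- per-index bound
  have key : ∀ i, ∫ ω, ((Y i ω - M0 (X i ω).1 (X i ω).2) ^ 2
      - (Y i ω - M (X i ω).1 (X i ω).2) ^ 2) ^ 2 ∂P
      ≤ c * ∫ ω, (D (X i ω)) ^ 2 ∂P := by
    intro i
    have hbound : ∀ ω, ((Y i ω - M0 (X i ω).1 (X i ω).2) ^ 2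
        - (Y i ω - M (X i ω).1 (X i ω).2) ^ 2) ^ 2
        ≤ 8 * ((E i ω) ^ 2 * (D (X i ω)) ^ 2) + 2 * (3 * L) ^ 2 * (D (X i ω)) ^ 2 := by
      intro ω
      have hYe := hY i ω
      have hT : (Y i ω - M0 (X i ω).1 (X i ω).2) ^ 2
          - (Y i ω - M (X i ω).1 (X i ω).2) ^ 2
          = -(2 * E i ω * D (X i ω) + (D (X i ω)) ^ 2) := by
        rw [hYe]; simp only [hDdef]; ring
      rw [hT]
      have hd := hDbound (X i ω)
      have h0 : (0:ℝ) ≤ |D (X i ω)| := abs_nonneg _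
      have hd2 : (D (X i ω)) ^ 2 ≤ (3 * L) ^ 2 := by
        rw [← sq_abs]; nlinarith
      have hsq : (-(2 * E i ω * D (X i ω) + (D (X i ω)) ^ 2)) ^ 2
          ≤ 2 * (2 * E i ω * D (X i ω)) ^ 2 + 2 * ((D (X i ω)) ^ 2) ^ 2 := by
        nlinarith [sq_nonneg (2 * E i ω * D (X i ω) - (D (X i ω)) ^ 2)]
      have hd4 : ((D (X i ω)) ^ 2) ^ 2 ≤ (3 * L) ^ 2 * (D (X i ω)) ^ 2 := by
        nlinarith [sq_nonneg (D (X i ω))]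
      nlinarith
    have hgint : Integrable (fun ω => 8 * ((E i ω) ^ 2 * (D (X i ω)) ^ 2)
        + 2 * (3 * L) ^ 2 * (D (X i ω)) ^ 2) P :=
      ((hε2D2int i).const_mul 8).add ((hD2int i).const_mul _)
    have hmono := integral_mono_of_nonneg (f := fun ω =>
        ((Y i ω - M0 (X i ω).1 (X i ω).2) ^ 2
        - (Y i ω - M (X i ω).1 (X i ω).2) ^ 2) ^ 2)
      (Filter.Eventually.of_forall fun ω => sq_nonneg _) hgint
      (Filter.Eventually.of_forall hbound)
    refine hmono.trans ?_
    rw [integral_add ((hε2D2int i).const_mul 8) ((hD2int i).const_mul _),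
      integral_const_mul, integral_const_mul, hprod2 i]
    have h1 : (∫ ω, (E i ω) ^ 2 ∂P) * ∫ ω, (D (X i ω)) ^ 2 ∂P
        ≤ σ ^ 2 * ∫ ω, (D (X i ω)) ^ 2 ∂P :=
      mul_le_mul_of_nonneg_right (hmom2 i) (hD2nonneg i)
    rw [hc]; nlinarith [hD2nonneg i]
  -- identical distribution: ∫ D(X i)² = ∫ D(X i₀)²
  have hIdD : ∀ i : Fin n, ∫ ω, (D (X i ω)) ^ 2 ∂P = ∫ ω, (D (X i₀ ω)) ^ 2 ∂P := by
    intro i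
    have hX' : IdentDistrib (X i) (X i₀) P P :=
      (hident i i₀).comp measurable_fst
    have := hX'.comp (measurable_of_countable (fun x => (D x) ^ 2))
    exact this.integral_eq
  -- risk difference
  have hΔ : predRisk P X Y i₀ M - predRisk P X Y i₀ M0 = ∫ ω, (D (X i₀ ω)) ^ 2 ∂P := by
    have hM0risk : predRisk P X Y i₀ M0 = ∫ ω, (E i₀ ω) ^ 2 ∂P := by
      unfold predRisk
      congr 1; funext ω; rw [hY i₀ ω]; ring
    have hMrisk : predRisk P X Y i₀ M
        = ∫ ω, ((D (X i₀ ω)) ^ 2 + 2 * (E i₀ ω * D (X i₀ ω)) + (E i₀ ω) ^ 2) ∂P := by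
      unfold predRisk
      congr 1; funext ω; rw [hY i₀ ω]; simp only [hDdef]; ring
    have hsum2 : Integrable
        (fun ω => (D (X i₀ ω)) ^ 2 + 2 * (E i₀ ω * D (X i₀ ω))) P :=
      (hD2int i₀).add ((hεDint i₀).const_mul 2)
    have h2εD : Integrable (fun ω => 2 * (E i₀ ω * D (X i₀ ω))) P :=
      (hεDint i₀).const_mul 2
    rw [hMrisk, hM0risk, integral_add hsum2 (hε2int i₀),
      integral_add (hD2int i₀) h2εD, integral_const_mul, hprod1 i₀]
    ring
  calc ∑ i, ∫ ω, ((Y i ω - M0 (X i ω).1 (X i ω).2) ^ 2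
        - (Y i ω - M (X i ω).1 (X i ω).2) ^ 2) ^ 2 ∂P
      ≤ ∑ i : Fin n, c * ∫ ω, (D (X i ω)) ^ 2 ∂P :=
        Finset.sum_le_sum fun i _ => key i
    _ = ∑ i : Fin n, c * ∫ ω, (D (X i₀ ω)) ^ 2 ∂P := by
        refine Finset.sum_congr rfl fun i _ => by rw [hIdD i]
    _ = (n : ℝ) * c * ∫ ω, (D (X i₀ ω)) ^ 2 ∂P := by
        rw [Finset.sum_const, Finset.card_univ, Fintype.card_fin, nsmul_eq_mul]; ring
    _ = (n : ℝ) * c * (predRisk P X Y i₀ M - predRisk P X Y i₀ M0) := by rw [hΔ]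
end

section
/- Let M be an m×p matrix with ‖M‖_∞ = max_{i,j}|M_{ij}| ≤ 2L, define T_i = (Y_i − M⁰_{X_i})² − (Y_i − M_{X_i})², and set v = n (8σ² + 2(3L)²)(R(M) − R(M⁰)) and w = 12L(2ξ + 3L). Then for every integer k ≥ 3, Σ_{i=1}^n E[T_i^k] ≤ v k! w^{k−2}/2. -/
open MeasureTheory ProbabilityTheory
open scoped ENNReal BigOperators

/-- Higher moment bound for `Tᵢ = (Yᵢ - M⁰_{Xᵢ})² - (Yᵢ - M_{Xᵢ})²`: with
`v = n (8σ² + 2(3L)²)(R(M) - R(M⁰))` and `w = 12L(2ξ + 3L)`, for every `k ≥ 3`,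
`∑ E[Tᵢᵏ] ≤ v k! w^(k-2) / 2`. -/
theorem higher_moment_bound
    (m p n : ℕ) (hm : 0 < m) (hp : 0 < p) (hn : 0 < n)
    (L σ ξ : ℝ) (hL : 0 < L) (hσ : 0 < σ) (hξ : 0 < ξ)
    {Ω : Type*} [MeasurableSpace Ω] (P : Measure Ω) [IsProbabilityMeasure P]
    (X : Fin n → Ω → Fin m × Fin p) (hX : ∀ i, Measurable (X i))
    (E : Fin n → Ω → ℝ) (hE : ∀ i, Measurable (E i))
    (M0 : Fin m → Fin p → ℝ) (hM0 : ∀ i j, |M0 i j| ≤ L)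
    (Y : Fin n → Ω → ℝ) (hY : ∀ i ω, Y i ω = M0 (X i ω).1 (X i ω).2 + E i ω)
    (hident : ∀ i j : Fin n,
      IdentDistrib (fun ω => (X i ω, Y i ω)) (fun ω => (X j ω, Y j ω)) P P)
    (hpairsindep : iIndepFun (fun i ω => (X i ω, Y i ω)) P)
    (hnoisesindep : iIndepFun E P)
    (hnoiseXindep : IndepFun (fun ω => fun i => E i ω) (fun ω => fun i => X i ω) P)
    (hmean : ∀ i, ∫ ω, E i ω ∂P = 0)
    (hmom2 : ∀ i, ∫ ω, (E i ω) ^ 2 ∂P ≤ σ ^ 2)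
    (hmomk : ∀ (i : Fin n) (k : ℕ), 3 ≤ k →
      ∫ ω, |E i ω| ^ k ∂P ≤ σ ^ 2 * (Nat.factorial k) * ξ ^ (k - 2))
    (hmomint : ∀ (i : Fin n) (k : ℕ), Integrable (fun ω => |E i ω| ^ k) P)
    (M : Fin m → Fin p → ℝ) (hM : ∀ i j, |M i j| ≤ 2 * L)
    (v w : ℝ)
    (hv : v = (n : ℝ) * (8 * σ ^ 2 + 2 * (3 * L) ^ 2) *
      (predRisk P X Y ⟨0, hn⟩ M - predRisk P X Y ⟨0, hn⟩ M0))
    (hw : w = 12 * L * (2 * ξ + 3 * L)) :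
    ∀ k : ℕ, 3 ≤ k →
      ∑ i, ∫ ω, ((Y i ω - M0 (X i ω).1 (X i ω).2) ^ 2
          - (Y i ω - M (X i ω).1 (X i ω).2) ^ 2) ^ k ∂P ≤
        v * (Nat.factorial k) * w ^ (k - 2) / 2 := by
  intro k hk
  obtain ⟨j, hj⟩ : ∃ j, k = j + 3 := ⟨k - 3, by omega⟩
  have hk2 : k - 2 = j + 1 := by omega
  set i0 : Fin n := ⟨0, hn⟩ with hi0
  set d : Fin m × Fin p → ℝ := fun x => M x.1 x.2 - M0 x.1 x.2 with hd
  have hdb : ∀ x, |d x| ≤ 3 * L := by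
    intro x
    calc |d x| ≤ |M x.1 x.2| + |M0 x.1 x.2| := abs_sub _ _
      _ ≤ 2 * L + L := add_le_add (hM x.1 x.2) (hM0 x.1 x.2)
      _ = 3 * L := by ring
  -- independence of functions of the noise and functions of the design
  have hindep : ∀ (i : Fin n) (g : ℝ → ℝ) (h : Fin m × Fin p → ℝ), Measurable g →
      IndepFun (fun ω => g (E i ω)) (fun ω => h (X i ω)) P := by
    intro i g h hg
    have h1 : IndepFun (E i) (X i) P :=
      hnoiseXindep.comp (measurable_pi_apply i) (measurable_pi_apply i)
    exact h1.comp hg (measurable_of_countable h)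
  -- integrability facts
  have habs : ∀ (i : Fin n), Integrable (fun ω => |E i ω|) P := by
    intro i; simpa using hmomint i 1
  have hEint : ∀ i, Integrable (E i) P := by
    intro i
    have := habs i
    rwa [show (fun ω => |E i ω|) = fun ω => ‖E i ω‖ by simp [Real.norm_eq_abs],
      integrable_norm_iff (hE i).aestronglyMeasurable] at this
  have hGmeas : ∀ (i : Fin n) (k' : ℕ),
      Measurable (fun ω => (2 * |E i ω| + 3 * L) ^ k') := by
    intro i k'
    exact (((hE i).abs.const_mul 2).add_const (3 * L)).pow_const k'
  have hGint : ∀ (i : Fin n) (k' : ℕ),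
      Integrable (fun ω => (2 * |E i ω| + 3 * L) ^ k') P := by
    intro i k'
    have hEq : (fun ω => (2 * |E i ω| + 3 * L) ^ k')
        = fun ω => ∑ r ∈ Finset.range (k' + 1),
            (2 ^ r * (3 * L) ^ (k' - r) * (k'.choose r)) * |E i ω| ^ r := by
      funext ω
      rw [add_pow]
      refine Finset.sum_congr rfl fun r _ => ?_
      rw [mul_pow]; ring
    rw [hEq]
    exact integrable_finset_sum _ fun r _ => (hmomint i r).const_mul _
  have hdXmeas : ∀ (i : Fin n), Measurable (fun ω => (d (X i ω)) ^ 2) :=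
    fun i => ((measurable_of_countable fun x => (d x) ^ 2).comp (hX i))
  have hduX : ∀ (i : Fin n), Integrable (fun ω => (d (X i ω)) ^ 2) P := by
    intro i
    refine Integrable.mono' (integrable_const ((3 * L) ^ 2))
      (hdXmeas i).aestronglyMeasurable (ae_of_all _ fun ω => ?_)
    rw [Real.norm_eq_abs, abs_of_nonneg (sq_nonneg _), ← sq_abs]
    exact pow_le_pow_left₀ (abs_nonneg _) (hdb _) 2
  have hE2 : ∀ i, Integrable (fun ω => (E i ω) ^ 2) P := by
    intro i; simpa [sq_abs] using hmomint i 2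
  have hEd : ∀ i, Integrable (fun ω => E i ω * d (X i ω)) P := by
    intro i
    refine Integrable.mono' ((habs i).const_mul (3 * L))
      ((hE i).mul ((measurable_of_countable d).comp (hX i))).aestronglyMeasurable
      (ae_of_all _ fun ω => ?_)
    rw [Real.norm_eq_abs, abs_mul]
    calc |E i ω| * |d (X i ω)| ≤ |E i ω| * (3 * L) :=
          mul_le_mul_of_nonneg_left (hdb _) (abs_nonneg _)
      _ = 3 * L * |E i ω| := by ring
  -- factorization of the product integral by independence
  have hfac : ∀ (i : Fin n) (k' : ℕ),
      ∫ ω, (2 * |E i ω| + 3 * L) ^ k' * (d (X i ω)) ^ 2 ∂P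
        = (∫ ω, (2 * |E i ω| + 3 * L) ^ k' ∂P) * ∫ ω, (d (X i ω)) ^ 2 ∂P := by
    intro i k'
    exact (hindep i (fun t => (2 * |t| + 3 * L) ^ k') (fun x => (d x) ^ 2)
        (((measurable_abs.const_mul 2).add_const (3 * L)).pow_const k')).integral_mul_eq_mul_integral
      (hGmeas i k').aestronglyMeasurable (hdXmeas i).aestronglyMeasurable
  -- cross term vanishes
  have hcross : ∀ i, ∫ ω, E i ω * d (X i ω) ∂P = 0 := by
    intro i
    have h := (hindep i id d measurable_id).integral_mul_eq_mul_integral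
      (hE i).aestronglyMeasurable
      ((measurable_of_countable d).comp (hX i)).aestronglyMeasurable
    simp only [id, Pi.mul_apply] at h
    rw [h, hmean i, zero_mul]
  -- identical distribution of the designs
  have hXid : ∀ (i : Fin n),
      ∫ ω, (d (X i ω)) ^ 2 ∂P = ∫ ω, (d (X i0 ω)) ^ 2 ∂P := by
    intro i
    exact (((hident i i0).comp measurable_fst).comp
      (measurable_of_countable fun x => (d x) ^ 2)).integral_eq
  set Δ : ℝ := ∫ ω, (d (X i0 ω)) ^ 2 ∂P with hΔdef
  have hΔ0 : 0 ≤ Δ := integral_nonneg fun ω => sq_nonneg _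
  -- risk difference
  have hpred : predRisk P X Y i0 M - predRisk P X Y i0 M0 = Δ := by
    have e1 : ∀ ω, (Y i0 ω - M (X i0 ω).1 (X i0 ω).2) ^ 2
        = ((E i0 ω) ^ 2 - 2 * (E i0 ω * d (X i0 ω))) + (d (X i0 ω)) ^ 2 := by
      intro ω; rw [hY]; simp only [hd]; ring
    have e2 : ∀ ω, (Y i0 ω - M0 (X i0 ω).1 (X i0 ω).2) ^ 2 = (E i0 ω) ^ 2 := by
      intro ω; rw [hY]; ring
    have hf1 : Integrable (fun ω => E i0 ω ^ 2 - 2 * (E i0 ω * d (X i0 ω))) P :=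
      (hE2 i0).sub ((hEd i0).const_mul 2)
    have hf2 : Integrable (fun ω => 2 * (E i0 ω * d (X i0 ω))) P :=
      (hEd i0).const_mul 2
    simp only [predRisk, e1, e2, hΔdef]
    rw [integral_add hf1 (hduX i0), integral_sub (hE2 i0) hf2,
      integral_const_mul _ _, hcross i0]
    ring
  -- moment bound for the noise factor
  have hkf1 : (1 : ℝ) ≤ (k.factorial : ℝ) := by
    exact_mod_cast Nat.one_le_iff_ne_zero.mpr k.factorial_ne_zero
  set c : ℝ := (4 * σ ^ 2 + 9 * L ^ 2) * (k.factorial : ℝ) * 4 ^ (j + 1)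
      * (2 * ξ + 3 * L) ^ (j + 1) with hcdef
  have hmb : ∀ i, ∫ ω, (2 * |E i ω| + 3 * L) ^ k ∂P ≤ c := by
    intro i
    have hpt : ∀ ω, (2 * |E i ω| + 3 * L) ^ k
        ≤ 2 ^ (k - 1) * (2 ^ k * |E i ω| ^ k + (3 * L) ^ k) := by
      intro ω
      have := add_pow_le (show (0:ℝ) ≤ 2 * |E i ω| by positivity)
        (show (0:ℝ) ≤ 3 * L by positivity) k
      calc (2 * |E i ω| + 3 * L) ^ k
          ≤ 2 ^ (k - 1) * ((2 * |E i ω|) ^ k + (3 * L) ^ k) := this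
        _ = 2 ^ (k - 1) * (2 ^ k * |E i ω| ^ k + (3 * L) ^ k) := by rw [mul_pow]
    have hint2 : Integrable (fun ω =>
        2 ^ (k - 1) * (2 ^ k * |E i ω| ^ k + (3 * L) ^ k)) P :=
      (((hmomint i k).const_mul _).add (integrable_const _)).const_mul _
    have h1 : ∫ ω, (2 * |E i ω| + 3 * L) ^ k ∂P
        ≤ ∫ ω, 2 ^ (k - 1) * (2 ^ k * |E i ω| ^ k + (3 * L) ^ k) ∂P :=
      integral_mono (hGint i k) hint2 hpt
    have h2 : ∫ ω, 2 ^ (k - 1) * (2 ^ k * |E i ω| ^ k + (3 * L) ^ k) ∂P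
        = 2 ^ (k - 1) * (2 ^ k * (∫ ω, |E i ω| ^ k ∂P) + (3 * L) ^ k) := by
      rw [integral_const_mul _ _, integral_add ((hmomint i k).const_mul _)
        (integrable_const _), integral_const_mul _ _, integral_const]
      simp
    have h3 : ∫ ω, |E i ω| ^ k ∂P ≤ σ ^ 2 * (k.factorial : ℝ) * ξ ^ (k - 2) :=
      hmomk i k hk
    have hk1 : k - 1 = j + 2 := by omega
    -- algebraic comparison
    have hZ : (3 * L) ^ (j + 1) ≤ (2 * ξ + 3 * L) ^ (j + 1) :=
      pow_le_pow_left₀ (by positivity) (by linarith) _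
    have hA : 2 ^ (j + 2) * 2 ^ (j + 3) * ξ ^ (j + 1)
        ≤ (4:ℝ) * 4 ^ (j + 1) * (2 * ξ + 3 * L) ^ (j + 1) := by
      have h2x : (2:ℝ) * ξ ^ (j + 1) ≤ (2 * ξ) ^ (j + 1) := by
        rw [mul_pow]
        refine mul_le_mul_of_nonneg_right ?_ (by positivity)
        exact le_self_pow₀ one_le_two (by omega)
      have h2x' : (2 * ξ) ^ (j + 1) ≤ (2 * ξ + 3 * L) ^ (j + 1) :=
        pow_le_pow_left₀ (by positivity) (by linarith) _
      have hpow : (2:ℝ) ^ (j + 2) * 2 ^ (j + 3) = 4 * 4 ^ (j + 1) * 2 ^ 1 := by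
        rw [show (4:ℝ) = 2 ^ 2 by norm_num, ← pow_mul, ← pow_add, ← pow_add, ← pow_add]
        ring_nf
      rw [hpow]
      calc 4 * 4 ^ (j + 1) * 2 ^ 1 * ξ ^ (j + 1)
          = 4 * 4 ^ (j + 1) * (2 * ξ ^ (j + 1)) := by ring
        _ ≤ 4 * 4 ^ (j + 1) * (2 * ξ + 3 * L) ^ (j + 1) := by
            refine mul_le_mul_of_nonneg_left ?_ (by positivity)
            exact h2x.trans h2x'
    have hB : (2:ℝ) ^ (j + 2) * (3 * L) ^ (j + 3)
        ≤ (k.factorial : ℝ) * (9 * L ^ 2 * (4 ^ (j + 1) * (2 * ξ + 3 * L) ^ (j + 1))) := by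
      have h24 : (2:ℝ) ^ (j + 2) ≤ 4 ^ (j + 1) := by
        rw [show (4:ℝ) = 2 ^ 2 by norm_num, ← pow_mul]
        exact pow_le_pow_right₀ one_le_two (by omega)
      calc (2:ℝ) ^ (j + 2) * (3 * L) ^ (j + 3)
          = (2 ^ (j + 2) * (3 * L) ^ (j + 1)) * (9 * L ^ 2) := by
            rw [show j + 3 = (j + 1) + 2 by ring, pow_add]; ring
        _ ≤ (4 ^ (j + 1) * (2 * ξ + 3 * L) ^ (j + 1)) * (9 * L ^ 2) := by
            refine mul_le_mul_of_nonneg_right ?_ (by positivity)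
            exact mul_le_mul h24 hZ (by positivity) (by positivity)
        _ ≤ (k.factorial : ℝ) * (9 * L ^ 2 * (4 ^ (j + 1) * (2 * ξ + 3 * L) ^ (j + 1))) := by
            rw [mul_comm]
            exact le_mul_of_one_le_left (by positivity) hkf1
    calc ∫ ω, (2 * |E i ω| + 3 * L) ^ k ∂P
        ≤ 2 ^ (k - 1) * (2 ^ k * (∫ ω, |E i ω| ^ k ∂P) + (3 * L) ^ k) := by
          rw [← h2]; exact h1
      _ ≤ 2 ^ (k - 1) * (2 ^ k * (σ ^ 2 * (k.factorial : ℝ) * ξ ^ (k - 2)) + (3 * L) ^ k) := by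
          refine mul_le_mul_of_nonneg_left (add_le_add_left
            (mul_le_mul_of_nonneg_left h3 (by positivity)) _) (by positivity)
      _ ≤ c := by
          rw [hcdef, hk1, hk2, show (2:ℝ) ^ k = 2 ^ (j + 3) by rw [hj],
            show (3 * L : ℝ) ^ k = (3 * L) ^ (j + 3) by rw [hj]]
          have expand : (2:ℝ) ^ (j + 2) * (2 ^ (j + 3) * (σ ^ 2 * (k.factorial : ℝ)
              * ξ ^ (j + 1)) + (3 * L) ^ (j + 3))
              = σ ^ 2 * (k.factorial : ℝ) * (2 ^ (j + 2) * 2 ^ (j + 3) * ξ ^ (j + 1))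
                + 2 ^ (j + 2) * (3 * L) ^ (j + 3) := by ring
          rw [expand]
          have t1 : σ ^ 2 * (k.factorial : ℝ) * (2 ^ (j + 2) * 2 ^ (j + 3) * ξ ^ (j + 1))
              ≤ σ ^ 2 * (k.factorial : ℝ)
                * (4 * 4 ^ (j + 1) * (2 * ξ + 3 * L) ^ (j + 1)) :=
            mul_le_mul_of_nonneg_left hA (by positivity)
          nlinarith [hB]
  -- pointwise bound on Tᵢ^k
  have hTeq : ∀ (i : Fin n) ω,
      (Y i ω - M0 (X i ω).1 (X i ω).2) ^ 2 - (Y i ω - M (X i ω).1 (X i ω).2) ^ 2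
        = d (X i ω) * (2 * E i ω - d (X i ω)) := by
    intro i ω; rw [hY]; simp only [hd]; ring
  have hTabs : ∀ (i : Fin n) ω,
      |(Y i ω - M0 (X i ω).1 (X i ω).2) ^ 2 - (Y i ω - M (X i ω).1 (X i ω).2) ^ 2|
        ≤ |d (X i ω)| * (2 * |E i ω| + 3 * L) := by
    intro i ω
    rw [hTeq i ω, abs_mul]
    refine mul_le_mul_of_nonneg_left ?_ (abs_nonneg _)
    calc |2 * E i ω - d (X i ω)| ≤ |2 * E i ω| + |d (X i ω)| := abs_sub _ _
      _ ≤ 2 * |E i ω| + 3 * L := by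
          rw [abs_mul, abs_two]; exact add_le_add_right (hdb _) _
  have hTpt : ∀ (i : Fin n) ω,
      ((Y i ω - M0 (X i ω).1 (X i ω).2) ^ 2 - (Y i ω - M (X i ω).1 (X i ω).2) ^ 2) ^ k
        ≤ (3 * L) ^ (k - 2) * ((2 * |E i ω| + 3 * L) ^ k * (d (X i ω)) ^ 2) := by
    intro i ω
    set T := (Y i ω - M0 (X i ω).1 (X i ω).2) ^ 2 - (Y i ω - M (X i ω).1 (X i ω).2) ^ 2
    have hA0 : (0:ℝ) ≤ 2 * |E i ω| + 3 * L := by positivity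
    calc T ^ k ≤ |T| ^ k := by rw [← abs_pow]; exact le_abs_self _
      _ ≤ (|d (X i ω)| * (2 * |E i ω| + 3 * L)) ^ k :=
          pow_le_pow_left₀ (abs_nonneg _) (hTabs i ω) k
      _ = |d (X i ω)| ^ k * (2 * |E i ω| + 3 * L) ^ k := mul_pow _ _ _
      _ ≤ ((3 * L) ^ (k - 2) * (d (X i ω)) ^ 2) * (2 * |E i ω| + 3 * L) ^ k := by
          refine mul_le_mul_of_nonneg_right ?_ (pow_nonneg hA0 k)
          have hsplit : |d (X i ω)| ^ k = |d (X i ω)| ^ (k - 2) * |d (X i ω)| ^ 2 := by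
            rw [← pow_add]; congr 1; omega
          rw [hsplit, sq_abs]
          exact mul_le_mul_of_nonneg_right
            (pow_le_pow_left₀ (abs_nonneg _) (hdb _) _) (sq_nonneg _)
      _ = (3 * L) ^ (k - 2) * ((2 * |E i ω| + 3 * L) ^ k * (d (X i ω)) ^ 2) := by ring
  -- integrability of Tᵢ^k and of the majorant
  have hYmeas : ∀ i, Measurable (Y i) := by
    intro i
    have he : Y i = fun ω => M0 (X i ω).1 (X i ω).2 + E i ω := funext (hY i)
    rw [he]
    exact ((measurable_of_countable fun x : Fin m × Fin p => M0 x.1 x.2).comp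
      (hX i)).add (hE i)
  have hTmeas : ∀ i, Measurable (fun ω =>
      (Y i ω - M0 (X i ω).1 (X i ω).2) ^ 2 - (Y i ω - M (X i ω).1 (X i ω).2) ^ 2) := by
    intro i
    exact (((hYmeas i).sub ((measurable_of_countable fun x : Fin m × Fin p =>
        M0 x.1 x.2).comp (hX i))).pow_const 2).sub
      (((hYmeas i).sub ((measurable_of_countable fun x : Fin m × Fin p =>
        M x.1 x.2).comp (hX i))).pow_const 2)
  have hprod_int : ∀ i, Integrable
      (fun ω => (2 * |E i ω| + 3 * L) ^ k * (d (X i ω)) ^ 2) P := by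
    intro i
    refine Integrable.mono' ((hGint i k).const_mul ((3 * L) ^ 2))
      ((hGmeas i k).mul (hdXmeas i)).aestronglyMeasurable (ae_of_all _ fun ω => ?_)
    have hg : (0:ℝ) ≤ (2 * |E i ω| + 3 * L) ^ k := by positivity
    have hd2 : (d (X i ω)) ^ 2 ≤ (3 * L) ^ 2 := by
      rw [← sq_abs]; exact pow_le_pow_left₀ (abs_nonneg _) (hdb _) 2
    rw [Real.norm_eq_abs, abs_of_nonneg (by positivity)]
    nlinarith [sq_nonneg (d (X i ω))]
  have hTint : ∀ i, Integrable (fun ω =>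
      ((Y i ω - M0 (X i ω).1 (X i ω).2) ^ 2
        - (Y i ω - M (X i ω).1 (X i ω).2) ^ 2) ^ k) P := by
    intro i
    refine Integrable.mono' ((hGint i k).const_mul ((3 * L) ^ k))
      ((hTmeas i).pow_const k).aestronglyMeasurable (ae_of_all _ fun ω => ?_)
    rw [Real.norm_eq_abs, abs_pow]
    calc |(Y i ω - M0 (X i ω).1 (X i ω).2) ^ 2
            - (Y i ω - M (X i ω).1 (X i ω).2) ^ 2| ^ k
        ≤ (|d (X i ω)| * (2 * |E i ω| + 3 * L)) ^ k :=
          pow_le_pow_left₀ (abs_nonneg _) (hTabs i ω) k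
      _ ≤ (3 * L * (2 * |E i ω| + 3 * L)) ^ k := by
          refine pow_le_pow_left₀ (by positivity) ?_ k
          exact mul_le_mul_of_nonneg_right (hdb _) (by positivity)
      _ = (3 * L) ^ k * (2 * |E i ω| + 3 * L) ^ k := mul_pow _ _ _
  -- per-index bound
  have key : ∀ i : Fin n,
      ∫ ω, ((Y i ω - M0 (X i ω).1 (X i ω).2) ^ 2
          - (Y i ω - M (X i ω).1 (X i ω).2) ^ 2) ^ k ∂P
        ≤ (3 * L) ^ (k - 2) * (c * Δ) := by
    intro i
    calc ∫ ω, ((Y i ω - M0 (X i ω).1 (X i ω).2) ^ 2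
            - (Y i ω - M (X i ω).1 (X i ω).2) ^ 2) ^ k ∂P
        ≤ ∫ ω, (3 * L) ^ (k - 2)
            * ((2 * |E i ω| + 3 * L) ^ k * (d (X i ω)) ^ 2) ∂P :=
          integral_mono (hTint i) ((hprod_int i).const_mul _) (hTpt i)
      _ = (3 * L) ^ (k - 2)
          * ((∫ ω, (2 * |E i ω| + 3 * L) ^ k ∂P) * ∫ ω, (d (X i ω)) ^ 2 ∂P) := by
          rw [integral_const_mul _ _, hfac i k]
      _ = (3 * L) ^ (k - 2) * ((∫ ω, (2 * |E i ω| + 3 * L) ^ k ∂P) * Δ) := by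
          rw [hXid i]
      _ ≤ (3 * L) ^ (k - 2) * (c * Δ) := by
          refine mul_le_mul_of_nonneg_left
            (mul_le_mul_of_nonneg_right (hmb i) hΔ0) (by positivity)
  -- sum over i and conclude
  have hsum : ∑ i, ∫ ω, ((Y i ω - M0 (X i ω).1 (X i ω).2) ^ 2
      - (Y i ω - M (X i ω).1 (X i ω).2) ^ 2) ^ k ∂P
      ≤ (n : ℝ) * ((3 * L) ^ (k - 2) * (c * Δ)) := by
    calc ∑ i, ∫ ω, ((Y i ω - M0 (X i ω).1 (X i ω).2) ^ 2
          - (Y i ω - M (X i ω).1 (X i ω).2) ^ 2) ^ k ∂P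
        ≤ ∑ _i : Fin n, (3 * L) ^ (k - 2) * (c * Δ) :=
          Finset.sum_le_sum fun i _ => key i
      _ = (n : ℝ) * ((3 * L) ^ (k - 2) * (c * Δ)) := by
          rw [Finset.sum_const, Finset.card_univ, Fintype.card_fin, nsmul_eq_mul]
  refine hsum.trans (le_of_eq ?_)
  rw [hv, hw, hpred, hcdef, hk2]
  have hwpow : (12 * L * (2 * ξ + 3 * L)) ^ (j + 1)
      = (3 * L) ^ (j + 1) * 4 ^ (j + 1) * (2 * ξ + 3 * L) ^ (j + 1) := by
    rw [show (12:ℝ) * L = 3 * L * 4 by ring, mul_pow, mul_pow]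
  rw [hwpow]
  ring
end

section
/- Let ρ be a probability measure on pairs (μ,ν) of an m×K matrix μ and a p×K matrix ν under which μ and ν are independent, ∫ μ ρ(dμ,dν) = U, ∫ ν ρ(dμ,dν) = V, and ρ-almost surely max_{i,ℓ}|μ_{iℓ} − U_{iℓ}| ≤ c and max_{j,ℓ}|ν_{jℓ} − V_{jℓ}| ≤ c. Assume |U_{iℓ}| ≤ √(L/K) and |V_{jℓ}| ≤ √(L/K) for all entries. Then ∫ ‖μ ν^T − M⁰‖²_{F,Π} ρ(dμ,dν) ≤ K c² [ (√K c + √L)² + L ] + ‖U V^T − M⁰‖²_{F,Π}. -/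
open MeasureTheory ProbabilityTheory
open scoped ENNReal BigOperators

/-- Bias–variance style expansion bound: if under `ρ` the factors `μ` and `ν` are independent
with means `U`, `V`, entries within `c` of the means almost surely, and `|U_{iℓ}|, |V_{jℓ}| ≤
√(L/K)`, then `∫ ‖μνᵀ - M⁰‖²_{F,Π} dρ ≤ K c² ((√K c + √L)² + L) + ‖UVᵀ - M⁰‖²_{F,Π}`. -/
theorem integrated_genFrob_bound
    (m p K : ℕ) (hm : 0 < m) (hp : 0 < p) (hK : 0 < K)
    (c L : ℝ) (hc : 0 ≤ c) (hL : 0 < L)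
    (M0 : Fin m → Fin p → ℝ)
    (Pi : Fin m → Fin p → ℝ) (hPi0 : ∀ i j, 0 ≤ Pi i j) (hPi1 : ∑ i, ∑ j, Pi i j = 1)
    (U : Fin m → Fin K → ℝ) (V : Fin p → Fin K → ℝ)
    (hU : ∀ i ℓ, |U i ℓ| ≤ Real.sqrt (L / K)) (hV : ∀ j ℓ, |V j ℓ| ≤ Real.sqrt (L / K))
    (ρ : Measure ((Fin m → Fin K → ℝ) × (Fin p → Fin K → ℝ))) [IsProbabilityMeasure ρ]
    (hindep : IndepFun (fun x => x.1) (fun x => x.2) ρ)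
    (hmeanU : ∀ i ℓ, ∫ x, x.1 i ℓ ∂ρ = U i ℓ)
    (hmeanV : ∀ j ℓ, ∫ x, x.2 j ℓ ∂ρ = V j ℓ)
    (hbound : ∀ᵐ x ∂ρ,
      (∀ i ℓ, |x.1 i ℓ - U i ℓ| ≤ c) ∧ (∀ j ℓ, |x.2 j ℓ - V j ℓ| ≤ c)) :
    ∫ x, genFrobSq Pi (fun i j => matMul x.1 x.2 i j - M0 i j) ∂ρ ≤
      (K : ℝ) * c ^ 2 * ((Real.sqrt K * c + Real.sqrt L) ^ 2 + L) +
        genFrobSq Pi (fun i j => matMul U V i j - M0 i j) := by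
  classical
  have hK' : (0:ℝ) < (K:ℝ) := by exact_mod_cast hK
  have hsK : Real.sqrt K * Real.sqrt K = (K:ℝ) := Real.mul_self_sqrt hK'.le
  set d : ℝ := Real.sqrt (L / K) with hd
  have hd0 : 0 ≤ d := Real.sqrt_nonneg _
  have hdK : (K:ℝ) * d = Real.sqrt K * Real.sqrt L := by
    have hsK0 : (0:ℝ) < Real.sqrt K := Real.sqrt_pos.2 hK'
    have hdd : d = Real.sqrt L / Real.sqrt K := by
      rw [hd, Real.sqrt_div hL.le]
    rw [hdd, ← mul_div_assoc, div_eq_iff hsK0.ne']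
    linear_combination (-Real.sqrt L) * hsK
  have hdsq : d ^ 2 = L / K := Real.sq_sqrt (by positivity)
  -- measurability of coordinates
  have hmU : ∀ (i : Fin m) (ℓ : Fin K),
      Measurable fun x : (Fin m → Fin K → ℝ) × (Fin p → Fin K → ℝ) => x.1 i ℓ :=
    fun i ℓ => (measurable_pi_apply ℓ).comp ((measurable_pi_apply i).comp measurable_fst)
  have hmV : ∀ (j : Fin p) (ℓ : Fin K),
      Measurable fun x : (Fin m → Fin K → ℝ) × (Fin p → Fin K → ℝ) => x.2 j ℓ :=
    fun j ℓ => (measurable_pi_apply ℓ).comp ((measurable_pi_apply j).comp measurable_snd)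
  -- a.e. bounds
  have hAE : ∀ᵐ x ∂ρ,
      (∀ i ℓ, |x.1 i ℓ - U i ℓ| ≤ c ∧ |x.1 i ℓ| ≤ c + d) ∧
      (∀ j ℓ, |x.2 j ℓ - V j ℓ| ≤ c ∧ |x.2 j ℓ| ≤ c + d) := by
    filter_upwards [hbound] with x hx
    refine ⟨fun i ℓ => ⟨hx.1 i ℓ, ?_⟩, fun j ℓ => ⟨hx.2 j ℓ, ?_⟩⟩
    · calc |x.1 i ℓ| = |(x.1 i ℓ - U i ℓ) + U i ℓ| := by ring_nf
        _ ≤ |x.1 i ℓ - U i ℓ| + |U i ℓ| := abs_add_le _ _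
        _ ≤ c + d := add_le_add (hx.1 i ℓ) (hU i ℓ)
    · calc |x.2 j ℓ| = |(x.2 j ℓ - V j ℓ) + V j ℓ| := by ring_nf
        _ ≤ |x.2 j ℓ - V j ℓ| + |V j ℓ| := abs_add_le _ _
        _ ≤ c + d := add_le_add (hx.2 j ℓ) (hV j ℓ)
  -- integrability from boundedness
  have hint : ∀ (f : (Fin m → Fin K → ℝ) × (Fin p → Fin K → ℝ) → ℝ) (Cf : ℝ),
      Measurable f → (∀ᵐ x ∂ρ, |f x| ≤ Cf) → Integrable f ρ := fun f Cf hf hb =>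
    (integrable_const Cf).mono' hf.aestronglyMeasurable (by simpa using hb)
  have hintμ : ∀ i ℓ, Integrable (fun x :
      (Fin m → Fin K → ℝ) × (Fin p → Fin K → ℝ) => x.1 i ℓ) ρ := fun i ℓ =>
    hint _ (c + d) (hmU i ℓ) (hAE.mono fun x hx => (hx.1 i ℓ).2)
  have hintν : ∀ j ℓ, Integrable (fun x :
      (Fin m → Fin K → ℝ) × (Fin p → Fin K → ℝ) => x.2 j ℓ) ρ := fun j ℓ =>
    hint _ (c + d) (hmV j ℓ) (hAE.mono fun x hx => (hx.2 j ℓ).2)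
  -- the key per-entry bound
  have key : ∀ (i : Fin m) (j : Fin p),
      ∫ x, (matMul x.1 x.2 i j - M0 i j) ^ 2 ∂ρ ≤
        (K : ℝ) * c ^ 2 * ((Real.sqrt K * c + Real.sqrt L) ^ 2 + L) +
          (matMul U V i j - M0 i j) ^ 2 := by
    intro i j
    set b : ℝ := matMul U V i j - M0 i j with hb
    set S : (Fin m → Fin K → ℝ) × (Fin p → Fin K → ℝ) → ℝ :=
      fun x => ∑ ℓ, (x.1 i ℓ - U i ℓ) * x.2 j ℓ with hS
    set T : (Fin m → Fin K → ℝ) × (Fin p → Fin K → ℝ) → ℝ :=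
      fun x => ∑ ℓ, U i ℓ * (x.2 j ℓ - V j ℓ) with hT
    have hdecomp : ∀ x : (Fin m → Fin K → ℝ) × (Fin p → Fin K → ℝ),
        matMul x.1 x.2 i j - M0 i j = S x + T x + b := by
      intro x
      have h1 : ∀ ℓ : Fin K, x.1 i ℓ * x.2 j ℓ =
          ((x.1 i ℓ - U i ℓ) * x.2 j ℓ + U i ℓ * (x.2 j ℓ - V j ℓ)) + U i ℓ * V j ℓ :=
        fun ℓ => by ring
      simp only [matMul, hS, hT, hb, matMul]
      rw [Finset.sum_congr rfl fun ℓ _ => h1 ℓ]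
      rw [Finset.sum_add_distrib, Finset.sum_add_distrib]
      ring
    -- measurability
    have hmS : Measurable S :=
      Finset.measurable_sum _ fun ℓ _ => ((hmU i ℓ).sub measurable_const).mul (hmV j ℓ)
    have hmT : Measurable T :=
      Finset.measurable_sum _ fun ℓ _ => ((hmV j ℓ).sub measurable_const).const_mul (U i ℓ)
    -- a.e. bounds on S and T
    have hSb : ∀ᵐ x ∂ρ, |S x| ≤ (K:ℝ) * (c * (c + d)) := by
      filter_upwards [hAE] with x hx
      calc |S x| ≤ ∑ ℓ, |(x.1 i ℓ - U i ℓ) * x.2 j ℓ| := Finset.abs_sum_le_sum_abs _ _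
        _ ≤ ∑ _ℓ : Fin K, c * (c + d) := Finset.sum_le_sum fun ℓ _ => by
            rw [abs_mul]
            exact mul_le_mul (hx.1 i ℓ).1 (hx.2 j ℓ).2 (abs_nonneg _) hc
        _ = (K:ℝ) * (c * (c + d)) := by simp [Finset.sum_const, mul_comm]
    have hTb : ∀ᵐ x ∂ρ, |T x| ≤ (K:ℝ) * (d * c) := by
      filter_upwards [hAE] with x hx
      calc |T x| ≤ ∑ ℓ, |U i ℓ * (x.2 j ℓ - V j ℓ)| := Finset.abs_sum_le_sum_abs _ _
        _ ≤ ∑ _ℓ : Fin K, d * c := Finset.sum_le_sum fun ℓ _ => by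
            rw [abs_mul]
            exact mul_le_mul (hU i ℓ) (hx.2 j ℓ).1 (abs_nonneg _) hd0
        _ = (K:ℝ) * (d * c) := by simp [Finset.sum_const, mul_comm]
    -- integrability of the pieces
    have hintS : Integrable S ρ := hint _ _ hmS hSb
    have hintT : Integrable T ρ := hint _ _ hmT hTb
    have hintS2 : Integrable (fun x => S x ^ 2) ρ :=
      hint _ ((K * (c * (c + d))) ^ 2) (hmS.pow_const 2)
        (hSb.mono fun x hx => by
          rw [abs_pow]
          exact pow_le_pow_left₀ (abs_nonneg _) hx 2)
    have hintT2 : Integrable (fun x => T x ^ 2) ρ :=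
      hint _ ((K * (d * c)) ^ 2) (hmT.pow_const 2)
        (hTb.mono fun x hx => by
          rw [abs_pow]
          exact pow_le_pow_left₀ (abs_nonneg _) hx 2)
    have hintST : Integrable (fun x => S x * T x) ρ :=
      hint _ ((K * (c * (c + d))) * (K * (d * c))) (hmS.mul hmT)
        ((hSb.and hTb).mono fun x hx => by
          rw [abs_mul]
          exact mul_le_mul hx.1 hx.2 (abs_nonneg _)
            (mul_nonneg (by positivity) (by positivity)))
    -- zero means
    have hS0 : ∫ x, S x ∂ρ = 0 := by
      rw [hS, integral_finset_sum _ (f := fun (ℓ : Fin K)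
          (x : (Fin m → Fin K → ℝ) × (Fin p → Fin K → ℝ)) => (x.1 i ℓ - U i ℓ) * x.2 j ℓ) (fun ℓ _ =>
        hint _ (c * (c + d)) (((hmU i ℓ).sub measurable_const).mul (hmV j ℓ))
          (hAE.mono fun x hx => by
            simp only [abs_mul]
            exact mul_le_mul (hx.1 i ℓ).1 (hx.2 j ℓ).2 (abs_nonneg _) hc))]
      refine Finset.sum_eq_zero fun ℓ _ => ?_
      have hφ : Measurable fun u : Fin m → Fin K → ℝ => u i ℓ - U i ℓ :=
        ((measurable_pi_apply ℓ).comp (measurable_pi_apply i) :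
          Measurable fun u : Fin m → Fin K → ℝ => u i ℓ).sub measurable_const
      have hψ : Measurable fun v : Fin p → Fin K → ℝ => v j ℓ :=
        (measurable_pi_apply ℓ).comp (measurable_pi_apply j)
      have hind : IndepFun (fun x : (Fin m → Fin K → ℝ) × (Fin p → Fin K → ℝ) =>
          x.1 i ℓ - U i ℓ) (fun x => x.2 j ℓ) ρ := hindep.comp hφ hψ
      have hintA : Integrable (fun x : (Fin m → Fin K → ℝ) × (Fin p → Fin K → ℝ) =>
          x.1 i ℓ - U i ℓ) ρ := (hintμ i ℓ).sub (integrable_const _)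
      have := hind.integral_fun_mul_eq_mul_integral hintA.aestronglyMeasurable
        (hintν j ℓ).aestronglyMeasurable
      have hA0 : ∫ x, (x.1 i ℓ - U i ℓ) ∂ρ = 0 := by
        rw [integral_sub (hintμ i ℓ) (integrable_const _), hmeanU, integral_const]
        simp
      calc ∫ x, (x.1 i ℓ - U i ℓ) * x.2 j ℓ ∂ρ
          = (∫ x, (x.1 i ℓ - U i ℓ) ∂ρ) * ∫ x, x.2 j ℓ ∂ρ := this
        _ = 0 := by rw [hA0, zero_mul]
    have hT0 : ∫ x, T x ∂ρ = 0 := by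
      simp only [hT]
      rw [integral_finset_sum (μ := ρ) Finset.univ
        (f := fun (ℓ : Fin K) (x : (Fin m → Fin K → ℝ) × (Fin p → Fin K → ℝ)) =>
          U i ℓ * (x.2 j ℓ - V j ℓ))
        (fun ℓ _ => ((hintν j ℓ).sub (integrable_const _)).const_mul (U i ℓ))]
      refine Finset.sum_eq_zero fun ℓ _ => ?_
      rw [integral_const_mul, integral_sub (hintν j ℓ) (integrable_const _), hmeanV,
        integral_const]
      simp
    -- vanishing cross term
    have hST0 : ∫ x, S x * T x ∂ρ = 0 := by
      have hre : ∀ x : (Fin m → Fin K → ℝ) × (Fin p → Fin K → ℝ), S x * T x =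
          ∑ ℓ, ∑ ℓ', U i ℓ' * ((x.1 i ℓ - U i ℓ) * (x.2 j ℓ * (x.2 j ℓ' - V j ℓ'))) := by
        intro x
        rw [hS, hT, Finset.sum_mul_sum]
        exact Finset.sum_congr rfl fun ℓ _ => Finset.sum_congr rfl fun ℓ' _ => by ring
      have hintt : ∀ (ℓ ℓ' : Fin K), Integrable (fun x :
          (Fin m → Fin K → ℝ) × (Fin p → Fin K → ℝ) =>
          U i ℓ' * ((x.1 i ℓ - U i ℓ) * (x.2 j ℓ * (x.2 j ℓ' - V j ℓ')))) ρ := by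
        intro ℓ ℓ'
        refine hint _ (d * (c * ((c + d) * c))) (Measurable.const_mul
          (((hmU i ℓ).sub measurable_const).mul ((hmV j ℓ).mul
          ((hmV j ℓ').sub measurable_const))) _) ?_
        filter_upwards [hAE] with x hx
        rw [abs_mul, abs_mul, abs_mul]
        refine mul_le_mul (hU i ℓ') ?_ (by positivity) hd0
        refine mul_le_mul (hx.1 i ℓ).1 ?_ (by positivity) hc
        exact mul_le_mul (hx.2 j ℓ).2 (hx.2 j ℓ').1 (abs_nonneg _) (by positivity)
      calc ∫ x, S x * T x ∂ρ
          = ∫ x, ∑ ℓ, ∑ ℓ', U i ℓ' *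
              ((x.1 i ℓ - U i ℓ) * (x.2 j ℓ * (x.2 j ℓ' - V j ℓ'))) ∂ρ := by
            exact congrArg (integral ρ) (funext hre)
        _ = ∑ ℓ, ∑ ℓ', ∫ x, U i ℓ' *
              ((x.1 i ℓ - U i ℓ) * (x.2 j ℓ * (x.2 j ℓ' - V j ℓ'))) ∂ρ := by
            rw [integral_finset_sum _ (fun ℓ _ => integrable_finset_sum _
              (fun ℓ' _ => hintt ℓ ℓ'))]
            exact Finset.sum_congr rfl fun ℓ _ =>
              integral_finset_sum _ fun ℓ' _ => hintt ℓ ℓ'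
        _ = 0 := by
            refine Finset.sum_eq_zero fun ℓ _ => Finset.sum_eq_zero fun ℓ' _ => ?_
            rw [integral_const_mul]
            have hφ : Measurable fun u : Fin m → Fin K → ℝ => u i ℓ - U i ℓ :=
              ((measurable_pi_apply ℓ).comp (measurable_pi_apply i) :
          Measurable fun u : Fin m → Fin K → ℝ => u i ℓ).sub measurable_const
            have hψ : Measurable fun v : Fin p → Fin K → ℝ =>
                v j ℓ * (v j ℓ' - V j ℓ') :=
              ((measurable_pi_apply ℓ).comp (measurable_pi_apply j) :
                Measurable fun v : Fin p → Fin K → ℝ => v j ℓ).mul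
                (((measurable_pi_apply ℓ').comp (measurable_pi_apply j) :
                Measurable fun v : Fin p → Fin K → ℝ => v j ℓ').sub
                  measurable_const)
            have hind : IndepFun (fun x : (Fin m → Fin K → ℝ) × (Fin p → Fin K → ℝ) =>
                x.1 i ℓ - U i ℓ)
                (fun x => x.2 j ℓ * (x.2 j ℓ' - V j ℓ')) ρ := hindep.comp hφ hψ
            have hintA : Integrable (fun x : (Fin m → Fin K → ℝ) × (Fin p → Fin K → ℝ) =>
                x.1 i ℓ - U i ℓ) ρ := (hintμ i ℓ).sub (integrable_const _)
            have hintB : Integrable (fun x : (Fin m → Fin K → ℝ) × (Fin p → Fin K → ℝ) =>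
                x.2 j ℓ * (x.2 j ℓ' - V j ℓ')) ρ :=
              hint _ ((c + d) * c) ((hmV j ℓ).mul ((hmV j ℓ').sub measurable_const))
                (hAE.mono fun x hx => by
                  rw [abs_mul]
                  exact mul_le_mul (hx.2 j ℓ).2 (hx.2 j ℓ').1 (abs_nonneg _) (by positivity))
            have hA0 : ∫ x, (x.1 i ℓ - U i ℓ) ∂ρ = 0 := by
              rw [integral_sub (hintμ i ℓ) (integrable_const _), hmeanU, integral_const]
              simp
            have hmul : ∫ x, (x.1 i ℓ - U i ℓ) * (x.2 j ℓ * (x.2 j ℓ' - V j ℓ')) ∂ρ =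
                (∫ x, (x.1 i ℓ - U i ℓ) ∂ρ) *
                  ∫ x, x.2 j ℓ * (x.2 j ℓ' - V j ℓ') ∂ρ :=
              hind.integral_fun_mul_eq_mul_integral hintA.aestronglyMeasurable
                hintB.aestronglyMeasurable
            rw [hmul, hA0, zero_mul, mul_zero]
    -- bounds on second moments
    have hS2 : ∫ x, S x ^ 2 ∂ρ ≤ ((K:ℝ) * (c * (c + d))) ^ 2 := by
      calc ∫ x, S x ^ 2 ∂ρ ≤ ∫ _x, ((K:ℝ) * (c * (c + d))) ^ 2 ∂ρ := by
            refine integral_mono_ae hintS2 (integrable_const _) ?_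
            filter_upwards [hSb] with x hx
            calc S x ^ 2 = |S x| ^ 2 := (sq_abs _).symm
              _ ≤ ((K:ℝ) * (c * (c + d))) ^ 2 := pow_le_pow_left₀ (abs_nonneg _) hx 2
        _ = ((K:ℝ) * (c * (c + d))) ^ 2 := by simp
    have hT2 : ∫ x, T x ^ 2 ∂ρ ≤ ((K:ℝ) * (d * c)) ^ 2 := by
      calc ∫ x, T x ^ 2 ∂ρ ≤ ∫ _x, ((K:ℝ) * (d * c)) ^ 2 ∂ρ := by
            refine integral_mono_ae hintT2 (integrable_const _) ?_
            filter_upwards [hTb] with x hx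
            calc T x ^ 2 = |T x| ^ 2 := (sq_abs _).symm
              _ ≤ ((K:ℝ) * (d * c)) ^ 2 := pow_le_pow_left₀ (abs_nonneg _) hx 2
        _ = ((K:ℝ) * (d * c)) ^ 2 := by simp
    -- arithmetic identities
    have hc1 : ((K:ℝ) * (c * (c + d))) ^ 2 =
        (K:ℝ) * c ^ 2 * (Real.sqrt K * c + Real.sqrt L) ^ 2 := by
      have h1 : (K:ℝ) * (c * (c + d)) = Real.sqrt K * c * (Real.sqrt K * c + Real.sqrt L) := by
        linear_combination c * hdK - c ^ 2 * hsK
      rw [h1, mul_pow, mul_pow, Real.sq_sqrt hK'.le]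
    have hc2 : ((K:ℝ) * (d * c)) ^ 2 = (K:ℝ) * L * c ^ 2 := by
      have : ((K:ℝ) * (d * c)) ^ 2 = (K:ℝ) ^ 2 * d ^ 2 * c ^ 2 := by ring
      rw [this, hdsq]
      field_simp
    -- putting the entry bound together
    have hintSum : Integrable (fun x => S x + T x) ρ := hintS.add hintT
    have hintSq : Integrable (fun x => (S x + T x) ^ 2) ρ := by
      have heq : (fun x : (Fin m → Fin K → ℝ) × (Fin p → Fin K → ℝ) => (S x + T x) ^ 2)
          = fun x => S x ^ 2 + 2 * (S x * T x) + T x ^ 2 := funext fun x => by ring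
      rw [heq]
      exact (hintS2.add (hintST.const_mul 2)).add hintT2
    have hSq : ∫ x, (S x + T x) ^ 2 ∂ρ =
        (∫ x, S x ^ 2 ∂ρ) + (∫ x, T x ^ 2 ∂ρ) := by
      have heq : (fun x : (Fin m → Fin K → ℝ) × (Fin p → Fin K → ℝ) => (S x + T x) ^ 2)
          = fun x => S x ^ 2 + 2 * (S x * T x) + T x ^ 2 := funext fun x => by ring
      have h2ST : Integrable (fun x => 2 * (S x * T x)) ρ := hintST.const_mul 2
      have h12 : Integrable (fun x => S x ^ 2 + 2 * (S x * T x)) ρ := hintS2.add h2ST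
      rw [heq, integral_add h12 hintT2, integral_add hintS2 h2ST, integral_const_mul, hST0]
      ring
    calc ∫ x, (matMul x.1 x.2 i j - M0 i j) ^ 2 ∂ρ
        = ∫ x, ((S x + T x) ^ 2 + (2 * b) * (S x + T x) + b ^ 2) ∂ρ := by
          refine congrArg (integral ρ) (funext fun x => ?_)
          rw [hdecomp x]; ring
      _ = (∫ x, (S x + T x) ^ 2 ∂ρ) + (2 * b) * ((∫ x, S x ∂ρ) + ∫ x, T x ∂ρ) + b ^ 2 := by
          have hlin : Integrable (fun x => 2 * b * (S x + T x)) ρ :=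
            hintSum.const_mul (2 * b)
          have hq1 : Integrable (fun x => (S x + T x) ^ 2 + 2 * b * (S x + T x)) ρ :=
            hintSq.add hlin
          rw [integral_add hq1 (integrable_const _), integral_add hintSq hlin,
            integral_const_mul, integral_add hintS hintT, integral_const]
          simp
      _ = (∫ x, S x ^ 2 ∂ρ) + (∫ x, T x ^ 2 ∂ρ) + b ^ 2 := by
          rw [hSq, hS0, hT0]; ring
      _ ≤ ((K:ℝ) * (c * (c + d))) ^ 2 + ((K:ℝ) * (d * c)) ^ 2 + b ^ 2 := by
          gcongr
      _ = (K : ℝ) * c ^ 2 * ((Real.sqrt K * c + Real.sqrt L) ^ 2 + L) + b ^ 2 := by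
          rw [hc1, hc2]; ring
  -- assemble over all entries
  have hmEnt : ∀ (i : Fin m) (j : Fin p),
      Measurable fun x : (Fin m → Fin K → ℝ) × (Fin p → Fin K → ℝ) =>
        (matMul x.1 x.2 i j - M0 i j) ^ 2 := by
    intro i j
    exact ((Finset.measurable_sum _ fun ℓ _ =>
      (hmU i ℓ).mul (hmV j ℓ)).sub measurable_const).pow_const 2
  have hbEnt : ∀ (i : Fin m) (j : Fin p), ∀ᵐ x ∂ρ,
      |(matMul x.1 x.2 i j - M0 i j) ^ 2| ≤ ((K:ℝ) * ((c + d) * (c + d)) + |M0 i j|) ^ 2 := by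
    intro i j
    filter_upwards [hAE] with x hx
    have h1 : |matMul x.1 x.2 i j| ≤ (K:ℝ) * ((c + d) * (c + d)) := by
      calc |matMul x.1 x.2 i j| ≤ ∑ ℓ, |x.1 i ℓ * x.2 j ℓ| := Finset.abs_sum_le_sum_abs _ _
        _ ≤ ∑ _ℓ : Fin K, (c + d) * (c + d) := Finset.sum_le_sum fun ℓ _ => by
            rw [abs_mul]
            exact mul_le_mul (hx.1 i ℓ).2 (hx.2 j ℓ).2 (abs_nonneg _) (by positivity)
        _ = (K:ℝ) * ((c + d) * (c + d)) := by simp [Finset.sum_const, mul_comm]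
    have h2 : |matMul x.1 x.2 i j - M0 i j| ≤ (K:ℝ) * ((c + d) * (c + d)) + |M0 i j| := by
      calc |matMul x.1 x.2 i j - M0 i j| = |matMul x.1 x.2 i j + -(M0 i j)| := by
            rw [sub_eq_add_neg]
        _ ≤ |matMul x.1 x.2 i j| + |-(M0 i j)| := abs_add_le _ _
        _ ≤ (K:ℝ) * ((c + d) * (c + d)) + |M0 i j| := by
            rw [abs_neg]; exact add_le_add h1 le_rfl
    rw [abs_pow]
    exact pow_le_pow_left₀ (abs_nonneg _) h2 2
  have hintEnt : ∀ (i : Fin m) (j : Fin p), Integrable (fun x :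
      (Fin m → Fin K → ℝ) × (Fin p → Fin K → ℝ) =>
      (matMul x.1 x.2 i j - M0 i j) ^ 2 * Pi i j) ρ := fun i j =>
    (hint _ _ (hmEnt i j) (hbEnt i j)).mul_const (Pi i j)
  set C : ℝ := (K : ℝ) * c ^ 2 * ((Real.sqrt K * c + Real.sqrt L) ^ 2 + L) with hC
  calc ∫ x, genFrobSq Pi (fun i j => matMul x.1 x.2 i j - M0 i j) ∂ρ
      = ∑ i, ∑ j, (∫ x, (matMul x.1 x.2 i j - M0 i j) ^ 2 ∂ρ) * Pi i j := by
        simp only [genFrobSq]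
        rw [integral_finset_sum _ (fun i _ => integrable_finset_sum _
          (fun j _ => hintEnt i j))]
        refine Finset.sum_congr rfl fun i _ => ?_
        rw [integral_finset_sum _ (fun j _ => hintEnt i j)]
        exact Finset.sum_congr rfl fun j _ => integral_mul_const _ _
    _ ≤ ∑ i, ∑ j, (C + (matMul U V i j - M0 i j) ^ 2) * Pi i j := by
        refine Finset.sum_le_sum fun i _ => Finset.sum_le_sum fun j _ => ?_
        exact mul_le_mul_of_nonneg_right (key i j) (hPi0 i j)
    _ = C * (∑ i, ∑ j, Pi i j) + ∑ i, ∑ j, (matMul U V i j - M0 i j) ^ 2 * Pi i j := by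
        simp only [add_mul, Finset.sum_add_distrib, Finset.mul_sum]
    _ = C + genFrobSq Pi (fun i j => matMul U V i j - M0 i j) := by
        rw [hPi1, mul_one]
        rfl
end

section
/- Let M = U V^T with U an m×K matrix, V a p×K matrix, |U_{iℓ}| ≤ √(L/K) and |V_{jℓ}| ≤ √(L/K) for all entries, and suppose the last K − k₀ columns of U and of V are zero, where k₀ ∈ {1,…,K}. Let κ ≤ c < (√2 − 1)√(L/K) and let ρ_{U,V,c} be the probability measure on pairs (μ,ν) proportional to 1{max_{i,ℓ}|μ_{iℓ} − U_{iℓ}| ≤ c, max_{j,ℓ}|ν_{jℓ} − V_{jℓ}| ≤ c} π(dμ,dν), where π is viewed as a distribution on factor pairs (μ,ν). Then K(ρ_{U,V,c}, π) ≤ 2(k₀ − 1) log(1/τ) + 2 log(1/(1−τ)) + (m+p) k₀ log( (1/c) √(2L/K) ). -/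
open MeasureTheory ProbabilityTheory
open scoped ENNReal BigOperators

section AuxLemmas

open MeasureTheory

instance unifIcc.isFiniteMeasure (a : ℝ) : IsFiniteMeasure (unifIcc a) := by
  constructor
  unfold unifIcc
  split_ifs with h
  · simp
  · rcases lt_or_gt_of_ne h with h2 | h2
    · rw [Measure.smul_apply, smul_eq_mul, Measure.restrict_apply MeasurableSet.univ,
        Set.univ_inter, Set.Icc_eq_empty (by linarith)]
      simp
    · rw [Measure.smul_apply, smul_eq_mul, Measure.restrict_apply MeasurableSet.univ,
        Set.univ_inter, Real.volume_Icc]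
      rw [show a - -a = 2 * a by ring, ENNReal.inv_mul_cancel (by positivity)
        (by exact ENNReal.ofReal_ne_top)]
      exact ENNReal.one_lt_top

instance ite_unifIcc_finite (δ κ : ℝ) (b : Prop) [Decidable b] :
    IsFiniteMeasure (if b then unifIcc δ else unifIcc κ) := by
  split_ifs <;> infer_instance

instance factorPrior.isFiniteMeasure (m K : ℕ) (δ κ : ℝ) (k : ℕ) :
    IsFiniteMeasure (factorPrior m K δ κ k) := by
  unfold factorPrior; infer_instance

instance pairPrior.isFiniteMeasure (m p K : ℕ) (L τ κ : ℝ) :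
    IsFiniteMeasure (pairPrior m p K L τ κ) := by
  constructor
  rw [pairPrior, Measure.finset_sum_apply]
  refine ENNReal.sum_lt_top.mpr fun k _ => ?_
  rw [Measure.smul_apply, smul_eq_mul]
  exact ENNReal.mul_lt_top ENNReal.ofReal_lt_top (measure_lt_top _ _)

lemma unifIcc_Icc {a x y : ℝ} (ha : 0 < a) (hx : -a ≤ x) (hy : y ≤ a) :
    unifIcc a (Set.Icc x y) = (ENNReal.ofReal (2 * a))⁻¹ * ENNReal.ofReal (y - x) := by
  unfold unifIcc
  rw [if_neg (by positivity), Measure.smul_apply, smul_eq_mul,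
    Measure.restrict_apply' measurableSet_Icc,
    Set.inter_eq_left.mpr (Set.Icc_subset_Icc hx hy), Real.volume_Icc]

lemma unifIcc_full {a c : ℝ} (ha : 0 ≤ a) (hac : a ≤ c) : unifIcc a (Set.Icc (-c) c) = 1 := by
  unfold unifIcc
  split_ifs with h
  · rw [Measure.dirac_apply' _ measurableSet_Icc, Set.indicator_of_mem]
    · rfl
    · exact Set.mem_Icc.mpr ⟨by linarith, by linarith⟩
  · have h2 : 0 < a := lt_of_le_of_ne ha (Ne.symm h)
    rw [Measure.smul_apply, smul_eq_mul, Measure.restrict_apply' measurableSet_Icc,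
      Set.inter_eq_right.mpr (Set.Icc_subset_Icc (by linarith) hac), Real.volume_Icc,
      show a - -a = 2 * a by ring]
    exact ENNReal.inv_mul_cancel (by positivity) ENNReal.ofReal_ne_top

lemma factorPrior_box {m K : ℕ} {δ κ c : ℝ} (hδ : 0 < δ) (hκ0 : 0 ≤ κ) (hκc : κ ≤ c)
    (k0 : ℕ) (hk0K : k0 ≤ K) (U : Fin m → Fin K → ℝ)
    (hUc : ∀ i (ℓ : Fin K), ((ℓ : ℕ) < k0) → -δ ≤ U i ℓ - c ∧ U i ℓ + c ≤ δ)
    (hU0 : ∀ i (ℓ : Fin K), k0 ≤ (ℓ : ℕ) → U i ℓ = 0) :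
    factorPrior m K δ κ k0
      (Set.univ.pi fun i => Set.univ.pi fun ℓ => Set.Icc (U i ℓ - c) (U i ℓ + c))
      = (((ENNReal.ofReal (2 * δ))⁻¹ * ENNReal.ofReal (2 * c)) ^ k0) ^ m := by
  unfold factorPrior
  rw [Measure.pi_pi]
  have key : ∀ i : Fin m,
      (Measure.pi fun ℓ : Fin K => if (ℓ : ℕ) < k0 then unifIcc δ else unifIcc κ)
        (Set.univ.pi fun ℓ => Set.Icc (U i ℓ - c) (U i ℓ + c))
      = ((ENNReal.ofReal (2 * δ))⁻¹ * ENNReal.ofReal (2 * c)) ^ k0 := by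
    intro i
    rw [Measure.pi_pi]
    have hterm : ∀ ℓ : Fin K,
        (if (ℓ : ℕ) < k0 then unifIcc δ else unifIcc κ) (Set.Icc (U i ℓ - c) (U i ℓ + c))
        = if (ℓ : ℕ) < k0 then (ENNReal.ofReal (2 * δ))⁻¹ * ENNReal.ofReal (2 * c) else 1 := by
      intro ℓ
      split_ifs with h
      · rw [unifIcc_Icc hδ (hUc i ℓ h).1 (hUc i ℓ h).2,
          show U i ℓ + c - (U i ℓ - c) = 2 * c by ring]
      · rw [hU0 i ℓ (le_of_not_gt h)]
        rw [show (0:ℝ) - c = -c by ring, zero_add]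
        exact unifIcc_full hκ0 hκc
    rw [Finset.prod_congr rfl (fun ℓ _ => hterm ℓ)]
    rw [Finset.prod_ite, Finset.prod_const, Finset.prod_const, one_pow, mul_one]
    congr 1
    have : Finset.filter (fun x : Fin K => (x : ℕ) < k0) Finset.univ
        = Finset.map (Fin.castLEEmb hk0K) Finset.univ := by
      ext x
      simp only [Finset.mem_filter, Finset.mem_univ, true_and, Finset.mem_map,
        Fin.castLEEmb_apply]
      constructor
      · intro hx
        exact ⟨⟨x, hx⟩, rfl⟩
      · rintro ⟨y, rfl⟩
        exact y.isLt
    rw [this, Finset.card_map, Finset.card_univ, Fintype.card_fin]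
  rw [Finset.prod_congr rfl (fun i _ => key i), Finset.prod_const, Finset.card_univ,
    Fintype.card_fin]

lemma KL_restrict_eq {A : Type*} [MeasurableSpace A] (π : Measure A) [IsFiniteMeasure π]
    {S : Set A} (hS : MeasurableSet S) (h0 : π S ≠ 0) :
    KLdiv ((π S)⁻¹ • π.restrict S) π = -Real.log (π S).toReal := by
  set ρ : Measure A := (π S)⁻¹ • π.restrict S with hρ
  have hne : (π S)⁻¹ ≠ ∞ := by simp [h0]
  have hrn : ρ.rnDeriv π =ᵐ[π] (π S)⁻¹ • S.indicator (1 : A → ℝ≥0∞) := by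
    refine (Measure.rnDeriv_smul_left_of_ne_top (π.restrict S) π hne).trans ?_
    filter_upwards [Measure.rnDeriv_restrict_self π hS] with x hx
    simp [hx]
  have hac : ρ ≪ π := by
    rw [hρ]
    exact (Measure.absolutelyContinuous_of_le Measure.restrict_le_self).smul_left _
  have hmemS : ∀ᵐ x ∂ρ, x ∈ S := by
    rw [ae_iff, hρ]
    simp only [Measure.smul_apply, smul_eq_mul]
    have : {a | a ∉ S} = Sᶜ := rfl
    rw [this, Measure.restrict_apply (hS.compl)]
    simp [Set.compl_inter_self]
  have hrnρ : ∀ᵐ x ∂ρ, (ρ.rnDeriv π x).toReal = ((π S)⁻¹).toReal := by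
    filter_upwards [hac.ae_le hrn, hmemS] with x hx hxS
    rw [hx]
    simp [Set.indicator_of_mem hxS]
  have hρuniv : ρ Set.univ = 1 := by
    rw [hρ]
    simp only [Measure.smul_apply, smul_eq_mul, Measure.restrict_apply MeasurableSet.univ,
      Set.univ_inter]
    exact ENNReal.inv_mul_cancel h0 (measure_ne_top _ _)
  have : IsProbabilityMeasure ρ := ⟨hρuniv⟩
  calc KLdiv ρ π = ∫ _, Real.log (((π S)⁻¹).toReal) ∂ρ := by
        unfold KLdiv
        exact integral_congr_ae (by filter_upwards [hrnρ] with x hx; rw [hx])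
    _ = Real.log (((π S)⁻¹).toReal) := by rw [integral_const]; simp
    _ = -Real.log (π S).toReal := by rw [ENNReal.toReal_inv, Real.log_inv]

end AuxLemmas

set_option maxHeartbeats 2000000 in
/-- Kullback–Leibler bound for the truncated prior: for `M = UVᵀ` with factors bounded by
`√(L/K)` and only the first `k₀` columns nonzero, and `κ ≤ c < (√2 - 1)√(L/K)`, the measure
`ρ_{U,V,c}` (the prior conditioned on `‖μ - U‖_∞ ≤ c`, `‖ν - V‖_∞ ≤ c`) satisfies
`K(ρ_{U,V,c}, π) ≤ 2(k₀-1)log(1/τ) + 2 log(1/(1-τ)) + (m+p)k₀ log((1/c)√(2L/K))`. -/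
theorem kl_truncated_prior_bound
    (m p n : ℕ) (hm : 0 < m) (hp : 0 < p) (hn : 0 < n)
    (L τ : ℝ) (hL : 0 < L) (hτ : τ ∈ Set.Ioo (0 : ℝ) 1)
    (κ : ℝ) (hκ0 : 0 ≤ κ)
    (hκ : κ ≤ (1 / (n : ℝ)) * Real.sqrt (L / (10 * (min m p : ℝ))))
    (k0 : ℕ) (hk01 : 1 ≤ k0) (hk0K : k0 ≤ min m p)
    (U : Fin m → Fin (min m p) → ℝ) (V : Fin p → Fin (min m p) → ℝ)
    (hU : ∀ i ℓ, |U i ℓ| ≤ Real.sqrt (L / (min m p : ℝ)))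
    (hV : ∀ j ℓ, |V j ℓ| ≤ Real.sqrt (L / (min m p : ℝ)))
    (hU0 : ∀ i (ℓ : Fin (min m p)), k0 ≤ (ℓ : ℕ) → U i ℓ = 0)
    (hV0 : ∀ j (ℓ : Fin (min m p)), k0 ≤ (ℓ : ℕ) → V j ℓ = 0)
    (c : ℝ) (hκc : κ ≤ c)
    (hc : c < (Real.sqrt 2 - 1) * Real.sqrt (L / (min m p : ℝ)))
    (S : Set ((Fin m → Fin (min m p) → ℝ) × (Fin p → Fin (min m p) → ℝ)))
    (hS : S = {x | (∀ i ℓ, |x.1 i ℓ - U i ℓ| ≤ c) ∧ (∀ j ℓ, |x.2 j ℓ - V j ℓ| ≤ c)})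
    (ρ : Measure ((Fin m → Fin (min m p) → ℝ) × (Fin p → Fin (min m p) → ℝ)))
    (hρ : ρ = (pairPrior m p (min m p) L τ κ S)⁻¹ •
      (pairPrior m p (min m p) L τ κ).restrict S) :
    KLdiv ρ (pairPrior m p (min m p) L τ κ) ≤
      2 * ((k0 : ℝ) - 1) * Real.log (1 / τ) + 2 * Real.log (1 / (1 - τ))
        + ((m : ℝ) + (p : ℝ)) * (k0 : ℝ) *
          Real.log ((1 / c) * Real.sqrt (2 * L / (min m p : ℝ))) := by
  have hK : 0 < min m p := lt_min hm hp
  have hKR : (0:ℝ) < ((min m p : ℕ) : ℝ) := by exact_mod_cast hK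
  have hcast : ((m:ℝ) ⊓ (p:ℝ)) = ((min m p : ℕ) : ℝ) := (Nat.cast_min m p).symm
  rw [hcast] at hc hU hV ⊢
  set δ : ℝ := Real.sqrt (2 * L / ((min m p : ℕ) : ℝ)) with hδdef
  have hδpos : 0 < δ := Real.sqrt_pos.mpr (by positivity)
  have hc0 : 0 ≤ c := le_trans hκ0 hκc
  have hs2 : δ = Real.sqrt 2 * Real.sqrt (L / ((min m p : ℕ) : ℝ)) := by
    rw [hδdef, show (2:ℝ) * L / ((min m p : ℕ) : ℝ) = 2 * (L / ((min m p : ℕ) : ℝ)) by ring,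
      Real.sqrt_mul (by norm_num)]
  have hsp : 0 ≤ Real.sqrt (L / ((min m p : ℕ) : ℝ)) := Real.sqrt_nonneg _
  have hbound : ∀ u : ℝ, |u| ≤ Real.sqrt (L / ((min m p : ℕ) : ℝ)) → -δ ≤ u - c ∧ u + c ≤ δ := by
    intro u hu
    rw [abs_le] at hu
    constructor <;> [nlinarith [hs2, hu.1, hc]; nlinarith [hs2, hu.2, hc]]
  have hUbox : ∀ i (ℓ : Fin (min m p)), ((ℓ : ℕ) < k0) → -δ ≤ U i ℓ - c ∧ U i ℓ + c ≤ δ :=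
    fun i ℓ _ => hbound _ (hU i ℓ)
  have hVbox : ∀ j (ℓ : Fin (min m p)), ((ℓ : ℕ) < k0) → -δ ≤ V j ℓ - c ∧ V j ℓ + c ≤ δ :=
    fun j ℓ _ => hbound _ (hV j ℓ)
  set A : Set (Fin m → Fin (min m p) → ℝ) :=
    Set.univ.pi fun i => Set.univ.pi fun ℓ => Set.Icc (U i ℓ - c) (U i ℓ + c) with hA
  set B : Set (Fin p → Fin (min m p) → ℝ) :=
    Set.univ.pi fun j => Set.univ.pi fun ℓ => Set.Icc (V j ℓ - c) (V j ℓ + c) with hB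
  have hSAB : S = A ×ˢ B := by
    rw [hS, hA, hB]
    ext x
    simp only [Set.mem_setOf_eq, Set.mem_prod, Set.mem_pi, Set.mem_univ, forall_true_left,
      Set.mem_Icc, abs_le]
    constructor
    · rintro ⟨h1, h2⟩
      exact ⟨fun i ℓ => ⟨by linarith [(h1 i ℓ).1], by linarith [(h1 i ℓ).2]⟩,
        fun j ℓ => ⟨by linarith [(h2 j ℓ).1], by linarith [(h2 j ℓ).2]⟩⟩
    · rintro ⟨h1, h2⟩
      exact ⟨fun i ℓ => ⟨by linarith [(h1 i ℓ).1], by linarith [(h1 i ℓ).2]⟩,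
        fun j ℓ => ⟨by linarith [(h2 j ℓ).1], by linarith [(h2 j ℓ).2]⟩⟩
  have hSmeas : MeasurableSet S := by
    rw [hSAB]
    exact (MeasurableSet.univ_pi fun i => MeasurableSet.univ_pi fun ℓ =>
      measurableSet_Icc).prod
      (MeasurableSet.univ_pi fun j => MeasurableSet.univ_pi fun ℓ => measurableSet_Icc)
  set π := pairPrior m p (min m p) L τ κ with hπ
  set q : ℝ≥0∞ := (ENNReal.ofReal (2 * δ))⁻¹ * ENNReal.ofReal (2 * c) with hq
  set w : ℝ := τ ^ (k0 - 1) * (1 - τ) / (1 - τ ^ (min m p)) with hw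
  have hπS : ENNReal.ofReal w * ((q ^ k0) ^ m * (q ^ k0) ^ p) ≤ π S := by
    rw [hπ, pairPrior, Measure.finset_sum_apply]
    have hmem : k0 - 1 ∈ Finset.range (min m p) := Finset.mem_range.mpr (by omega)
    refine le_trans ?_ (Finset.single_le_sum (fun k _ => zero_le) hmem)
    rw [Measure.smul_apply, smul_eq_mul, hSAB, Measure.prod_prod,
      show k0 - 1 + 1 = k0 by omega, ← hδdef,
      factorPrior_box hδpos hκ0 hκc k0 hk0K U hUbox hU0,
      factorPrior_box hδpos hκ0 hκc k0 hk0K V hVbox hV0, ← hq, ← hw, ← mul_assoc]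
  rcases eq_or_lt_of_le hc0 with hceq | hcpos
  · -- c = 0 case
    have hπS0 : π S = 0 := by
      rw [hπ, pairPrior, Measure.finset_sum_apply]
      refine Finset.sum_eq_zero fun k _ => ?_
      rw [Measure.smul_apply, smul_eq_mul, hSAB, Measure.prod_prod]
      have hA0 : factorPrior m (min m p) (Real.sqrt (2 * L / ((min m p : ℕ) : ℝ))) κ (k + 1) A = 0 := by
        set i0 : Fin m := ⟨0, hm⟩
        set ℓ0 : Fin (min m p) := ⟨0, hK⟩
        set T : Set (Fin m → Fin (min m p) → ℝ) := Set.univ.pi fun i => Set.univ.pi fun ℓ =>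
          if i = i0 ∧ ℓ = ℓ0 then Set.Icc (U i ℓ - c) (U i ℓ + c) else Set.univ with hT
        have hsub : A ⊆ T := by
          intro x hx
        -- membership
          rw [hA, Set.mem_pi] at hx
          rw [hT, Set.mem_pi]
          intro i _
          rw [Set.mem_pi]
          intro ℓ _
          split_ifs with hif
          · exact (Set.mem_pi.mp (hx i trivial) ℓ trivial)
          · trivial
        have hT0 : factorPrior m (min m p) (Real.sqrt (2 * L / ((min m p : ℕ) : ℝ))) κ (k + 1) T = 0 := by
          rw [hT]
          unfold factorPrior
          rw [Measure.pi_pi]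
          refine Finset.prod_eq_zero (Finset.mem_univ i0) ?_
          rw [Measure.pi_pi]
          refine Finset.prod_eq_zero (Finset.mem_univ ℓ0) ?_
          rw [if_pos (show ((ℓ0 : ℕ)) < k + 1 from Nat.succ_pos k), if_pos ⟨rfl, rfl⟩]
          have hbd := hbound _ (hU i0 ℓ0)
          rw [← hδdef, unifIcc_Icc hδpos hbd.1 hbd.2,
            show U i0 ℓ0 + c - (U i0 ℓ0 - c) = 2 * c by ring, ← hceq]
          simp
        exact le_antisymm (hT0 ▸ measure_mono hsub) zero_le
      rw [hA0, zero_mul, mul_zero]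
    have hρ0 : ρ = 0 := by
      rw [hρ, Measure.restrict_eq_zero.mpr hπS0, smul_zero]
    rw [hρ0]
    have hKL0 : KLdiv (0 : Measure _) π = 0 := by
      unfold KLdiv
      exact integral_zero_measure _
    rw [hKL0]
    have h1 : 0 ≤ Real.log (1 / τ) := Real.log_nonneg (by
      rw [le_div_iff₀ hτ.1]; linarith [hτ.2])
    have h2 : 0 ≤ Real.log (1 / (1 - τ)) := Real.log_nonneg (by
      rw [le_div_iff₀ (by linarith [hτ.2] : (0:ℝ) < 1 - τ)]; linarith [hτ.1])
    have h3 : (1:ℝ) / c * Real.sqrt (2 * L / ((min m p : ℕ) : ℝ)) = 0 := by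
      rw [← hceq]; simp
    rw [h3, Real.log_zero, mul_zero]
    have hk0R : (1:ℝ) ≤ (k0:ℝ) := by exact_mod_cast hk01
    nlinarith
  · -- c > 0 case
    set r : ℝ := c / δ with hr
    have hrpos : 0 < r := div_pos hcpos hδpos
    have hqr : q = ENNReal.ofReal r := by
      rw [hq, ← ENNReal.ofReal_inv_of_pos (by positivity),
        ← ENNReal.ofReal_mul (by positivity)]
      congr 1
      field_simp [hr]
      rw [hr]; field_simp
    have hτK : τ ^ (min m p) < 1 := pow_lt_one₀ hτ.1.le hτ.2 (by omega)
    have hwpos : 0 < w := by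
      rw [hw]
      exact div_pos (mul_pos (pow_pos hτ.1 _) (by linarith [hτ.2])) (by linarith [hτK])
    set lb : ℝ := w * ((r ^ k0) ^ m * (r ^ k0) ^ p) with hlb
    have hrk : (0:ℝ) < r ^ k0 := pow_pos hrpos k0
    have hlbpos : 0 < lb := by
      rw [hlb]
      exact mul_pos hwpos (mul_pos (pow_pos hrk m) (pow_pos hrk p))
    have hofReal : ENNReal.ofReal lb ≤ π S := by
      rw [hlb, ENNReal.ofReal_mul hwpos.le,
        ENNReal.ofReal_mul (pow_nonneg hrk.le m),
        ENNReal.ofReal_pow hrk.le, ENNReal.ofReal_pow hrk.le,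
        ENNReal.ofReal_pow hrpos.le, ← hqr]
      exact hπS
    have h0 : π S ≠ 0 :=
      (lt_of_lt_of_le (ENNReal.ofReal_pos.mpr hlbpos) hofReal).ne'
    rw [hρ, KL_restrict_eq π hSmeas h0]
    have htoReal : lb ≤ (π S).toReal := by
      have := ENNReal.toReal_mono (measure_ne_top π S) hofReal
      rwa [ENNReal.toReal_ofReal hlbpos.le] at this
    have hlog : Real.log lb ≤ Real.log (π S).toReal := Real.log_le_log hlbpos htoReal
    refine le_trans (neg_le_neg hlog) ?_
    -- now a purely real computation
    have hlogw : Real.log w = ((k0:ℝ) - 1) * Real.log τ + Real.log (1 - τ)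
        - Real.log (1 - τ ^ (min m p)) := by
      have hτ1 : (0:ℝ) < 1 - τ := by linarith [hτ.2]
      have hτ2 : (0:ℝ) < 1 - τ ^ (min m p) := by linarith [hτK]
      rw [hw, Real.log_div (mul_pos (pow_pos hτ.1 _) hτ1).ne' hτ2.ne',
        Real.log_mul (pow_pos hτ.1 _).ne' hτ1.ne', Real.log_pow]
      have : ((k0 - 1 : ℕ) : ℝ) = (k0:ℝ) - 1 := by
        rw [Nat.cast_sub hk01]; norm_num
      rw [this]
    have hloglb : Real.log lb = Real.log w + (m:ℝ) * ((k0:ℝ) * Real.log r)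
        + (p:ℝ) * ((k0:ℝ) * Real.log r) := by
      rw [hlb, Real.log_mul hwpos.ne' (mul_pos (pow_pos hrk m) (pow_pos hrk p)).ne',
        Real.log_mul (pow_pos hrk m).ne' (pow_pos hrk p).ne', Real.log_pow, Real.log_pow,
        Real.log_pow, Real.log_pow]
      ring
    have hrinv : (1:ℝ) / c * Real.sqrt (2 * L / ((min m p : ℕ) : ℝ)) = r⁻¹ := by
      rw [hr, ← hδdef]
      field_simp
    rw [hrinv, Real.log_inv, one_div τ, one_div (1 - τ), Real.log_inv, Real.log_inv]
    have hlogτ : Real.log τ ≤ 0 := Real.log_nonpos hτ.1.le hτ.2.le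
    have hlog1τ : Real.log (1 - τ) ≤ 0 := Real.log_nonpos (by linarith [hτ.2]) (by linarith [hτ.1])
    have hlogτK : Real.log (1 - τ ^ (min m p)) ≤ 0 := Real.log_nonpos
      (by linarith [hτK]) (by linarith [pow_pos hτ.1 (min m p)])
    have hk0R : (1:ℝ) ≤ (k0:ℝ) := by exact_mod_cast hk01
    have hprod : 0 ≤ ((k0:ℝ) - 1) * (-Real.log τ) :=
      mul_nonneg (by linarith) (by linarith)
    rw [hloglb, hlogw]
    have hring : ((m:ℝ) + (p:ℝ)) * (k0:ℝ) * (-Real.log r)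
        = -((m:ℝ) * ((k0:ℝ) * Real.log r)) - (p:ℝ) * ((k0:ℝ) * Real.log r) := by ring
    linarith [hprod, hlog1τ, hlogτK, hring]
end
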